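/- The identity leaf function on a shape S (connecting the i-th leaf of the source copy of S to the i-th leaf of the target copy) satisfies the switching criterion: every switching of the identity S → S is a tree. (Proof by induction on the number of tensors in S.) -/

import Mathlib

attribute [local instance] Classical.propDecidable

namespace Nets

/-- A star-autonomous shape over a type `A` of generators: an expression built
from generators and the unit `I` by binary tensor and unary dual. -/
inductive Shape (A : Type) : Type where
  | gen : A → Shape A
  | unit : Shape A
  | tensor : Shape A → Shape A → Shape A
  | dual : Shape A → Shape A

/-- A vertex of the parse tree of a shape. -/
inductive Vtx {A : Type} : Shape A → Type where
  | root (S : Shape A) : Vtx S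
  | tleft {S T : Shape A} : Vtx S → Vtx (Shape.tensor S T)
  | tright {S T : Shape A} : Vtx T → Vtx (Shape.tensor S T)
  | dchild {S : Shape A} : Vtx S → Vtx (Shape.dual S)

namespace Shape

variable {A : Type}

/-- The sign of a vertex: `true` (positive) iff it is under an even number of duals. -/
def vsign : {S : Shape A} → Vtx S → Bool
  | _, .root _ => true
  | _, .tleft v => vsign v
  | _, .tright v => vsign v
  | _, .dchild v => !vsign v

/-- The subshape rooted at a vertex. -/
def subtreeAt : {S : Shape A} → Vtx S → Shape A
  | S, .root _ => S
  | _, .tleft v => subtreeAt v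
  | _, .tright v => subtreeAt v
  | _, .dchild v => subtreeAt v

/-- Atoms: generators and the unit. -/
def IsAtom : Shape A → Prop
  | gen _ => True
  | unit => True
  | _ => False

def IsTensorSh : Shape A → Prop
  | tensor _ _ => True
  | _ => False

/-- The generator labelling a shape, if any. -/
def lblSh : Shape A → Option A
  | gen a => some a
  | _ => none

/-- The parent of a vertex in the parse tree (none at the root). -/
def parent : {S : Shape A} → Vtx S → Option (Vtx S)
  | _, .root _ => none
  | _, .tleft v => some (match parent v with | none => .root _ | some p => .tleft p)
  | _, .tright v => some (match parent v with | none => .root _ | some p => .tright p)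
  | _, .dchild v => some (match parent v with | none => .root _ | some p => .dchild p)

/-- Which argument of its parent a vertex is (false = left, true = right);
only meaningful when the parent is a tensor. -/
def sideOf : {S : Shape A} → Vtx S → Bool
  | _, .root _ => false
  | _, .tleft v => match v with
    | .root _ => false
    | w => sideOf w
  | _, .tright v => match v with
    | .root _ => true
    | w => sideOf w
  | _, .dchild v => match v with
    | .root _ => false
    | w => sideOf w

end Shape

open Shape

/-- A cut sequent: a family of shapes (the sequent proper) together with a
family of cut pairs, the cut pair at `j` consisting of `cuts j` and its dual,
joined by a cut edge between their roots.  A plain sequent is the case where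
the cut index type `κ` is empty. -/
structure CutSeq (A : Type) where
  ι : Type
  main : ι → Shape A
  κ : Type
  cuts : κ → Shape A

namespace CutSeq

variable {A : Type}

/-- The vertices of (the parse forest of) a cut sequent. -/
def Vt (Γ : CutSeq A) : Type :=
  (Σ i : Γ.ι, Vtx (Γ.main i)) ⊕ (Σ j : Γ.κ, (Vtx (Γ.cuts j) ⊕ Vtx (Shape.dual (Γ.cuts j))))

variable {Γ : CutSeq A}

def sgn : Γ.Vt → Bool
  | .inl ⟨_, v⟩ => vsign v
  | .inr ⟨_, .inl v⟩ => vsign v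
  | .inr ⟨_, .inr v⟩ => vsign v

def shapeAt : Γ.Vt → Shape A
  | .inl ⟨_, v⟩ => subtreeAt v
  | .inr ⟨_, .inl v⟩ => subtreeAt v
  | .inr ⟨_, .inr v⟩ => subtreeAt v

def leaf (v : Γ.Vt) : Prop := IsAtom (shapeAt v)
def unitLeaf (v : Γ.Vt) : Prop := shapeAt v = Shape.unit
def lblAt (v : Γ.Vt) : Option A := lblSh (shapeAt v)

def par : Γ.Vt → Option Γ.Vt
  | .inl ⟨i, v⟩ => (parent v).map fun p => .inl ⟨i, p⟩
  | .inr ⟨j, .inl v⟩ => (parent v).map fun p => .inr ⟨j, .inl p⟩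
  | .inr ⟨j, .inr v⟩ => (parent v).map fun p => .inr ⟨j, .inr p⟩

def side : Γ.Vt → Bool
  | .inl ⟨_, v⟩ => sideOf v
  | .inr ⟨_, .inl v⟩ => sideOf v
  | .inr ⟨_, .inr v⟩ => sideOf v

/-- Switched vertices: negative tensors (one argument edge is deleted in a switching). -/
def switched (v : Γ.Vt) : Prop := IsTensorSh (shapeAt v) ∧ sgn v = false

def IsNeg (v : Γ.Vt) : Prop := leaf v ∧ sgn v = false
def IsPos (v : Γ.Vt) : Prop := leaf v ∧ sgn v = true

def NegLeaf (Γ : CutSeq A) : Type := {v : Γ.Vt // IsNeg v}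
def PosLeaf (Γ : CutSeq A) : Type := {v : Γ.Vt // IsPos v}

/-- The cut edges, joining the roots of the two shapes of each cut pair. -/
def cutEdge (a b : Γ.Vt) : Prop :=
  ∃ j : Γ.κ, a = .inr ⟨j, .inl (Vtx.root _)⟩ ∧ b = .inr ⟨j, .inr (Vtx.root _)⟩

/-- A lax leaf function: every negative leaf gets an edge; edges from
generator-labelled leaves must target positive leaves, edges from negative
unit leaves may target arbitrary vertices. -/
structure LaxLF (Γ : CutSeq A) where
  f : NegLeaf Γ → Γ.Vt
  gen_ok : ∀ v : NegLeaf Γ, ¬ unitLeaf v.1 → IsPos (f v)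

/-- Standard leaf functions: every edge targets a positive leaf. -/
def IsStandard (L : LaxLF Γ) : Prop := ∀ v, IsPos (L.f v)

/-- The switching determined by `σ`: delete the argument edge on the
non-chosen side of every negative tensor; keep parse edges, cut edges and
the (undirected) edges of the leaf function. -/
def switchGraph (L : LaxLF Γ) (σ : Γ.Vt → Bool) : SimpleGraph Γ.Vt :=
  SimpleGraph.fromRel fun a b =>
    (par a = some b ∧ (switched b → σ b = side a)) ∨ cutEdge a b ∨
      ∃ h : IsNeg a, L.f ⟨a, h⟩ = b

/-- The switching criterion: every switching is a tree. -/
def SwitchOK (L : LaxLF Γ) : Prop := ∀ σ : Γ.Vt → Bool, (switchGraph L σ).IsTree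

/-- The matching criterion: the restriction of the leaf function to
`a`-labelled leaves is a label-preserving bijection, for each generator `a`. -/
def Matching (L : LaxLF Γ) : Prop :=
  (∀ (v : NegLeaf Γ) (a : A), lblAt v.1 = some a → lblAt (L.f v) = some a) ∧
  (∀ v w : NegLeaf Γ, ¬ unitLeaf v.1 → ¬ unitLeaf w.1 → L.f v = L.f w → v = w) ∧
  (∀ (w : PosLeaf Γ) (a : A), lblAt w.1 = some a →
      ∃ v : NegLeaf Γ, ¬ unitLeaf v.1 ∧ L.f v = w.1)

/-- A lax linking: a lax leaf function satisfying matching and the switching criterion. -/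
def IsLaxLink (L : LaxLF Γ) : Prop := Matching L ∧ SwitchOK L

/-- A (standard) linking. -/
def IsLink (L : LaxLF Γ) : Prop := IsLaxLink L ∧ IsStandard L

/-- Similarity (Trimble rewiring): two lax linkings differing only in the
target of one edge from a negative unit leaf. -/
def Similar (L L' : LaxLF Γ) : Prop :=
  IsLaxLink L ∧ IsLaxLink L' ∧
  ∃ u : NegLeaf Γ, unitLeaf u.1 ∧ ∀ v : NegLeaf Γ, v ≠ u → L.f v = L'.f v

/-- Lax equivalence: chains of similar lax linkings. -/
def LaxEquiv : LaxLF Γ → LaxLF Γ → Prop := Relation.ReflTransGen Similar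

def StdSimilar (L L' : LaxLF Γ) : Prop := Similar L L' ∧ IsStandard L ∧ IsStandard L'

/-- Standard equivalence: chains of similar standard linkings. -/
def StdEquiv : LaxLF Γ → LaxLF Γ → Prop := Relation.ReflTransGen StdSimilar

end CutSeq

open CutSeq

/-- The (cut-free) sequent `S^⊥, T` encoding a two-sided linking `S → T`. -/
def two {A : Type} (S T : Shape A) : CutSeq A where
  ι := Bool
  main := fun b => match b with
    | false => Shape.dual S
    | true => T
  κ := Empty
  cuts := fun j => j.elim

end Nets

namespace Nets

open Shape CutSeq

variable {A : Type}

/-- Characterization of the identity linking `S → S`: the `i`-th leaf of the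
source copy of `S` is joined to the `i`-th leaf of the target copy. -/
def idChar (S : Shape A) (L : LaxLF (two S S)) : Prop :=
  (∀ (u : Vtx S) (h : IsNeg (Γ := two S S) (Sum.inl ⟨false, Vtx.dchild u⟩)),
      L.f ⟨Sum.inl ⟨false, Vtx.dchild u⟩, h⟩ = Sum.inl ⟨true, u⟩) ∧
  (∀ (u : Vtx S) (h : IsNeg (Γ := two S S) (Sum.inl ⟨true, u⟩)),
      L.f ⟨Sum.inl ⟨true, u⟩, h⟩ = Sum.inl ⟨false, Vtx.dchild u⟩)


section TreeLemma
open SimpleGraph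

lemma isTree_of_parent {V : Type*} (G : SimpleGraph V) (r : V) (p : V → V) (d : V → ℕ)
    (ha : ∀ v, v ≠ r → G.Adj v (p v))
    (hb : ∀ v w, G.Adj v w → (v ≠ r ∧ p v = w) ∨ (w ≠ r ∧ p w = v))
    (hd : ∀ v, v ≠ r → d (p v) < d v) : G.IsTree := by
  classical
  have reach : ∀ n v, d v ≤ n → G.Reachable v r := by
    intro n
    induction n with
    | zero =>
      intro v hv
      by_cases h : v = r
      · exact h ▸ Reachable.refl (G := G) r
      · exact absurd (lt_of_lt_of_le (hd v h) hv) (Nat.not_lt_zero _)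
    | succ n ih =>
      intro v hv
      by_cases h : v = r
      · exact h ▸ Reachable.refl (G := G) r
      · exact ((ha v h).reachable).trans (ih (p v) (by have := hd v h; omega))
  constructor
  · rw [connected_iff]
    refine ⟨?_, ⟨r⟩⟩
    intro v w
    exact (reach (d v) v le_rfl).trans (reach (d w) w le_rfl).symm
  · intro v c hc
    obtain ⟨u, hu⟩ : ∃ u, u ∈ c.support.argmax d := by
      cases h : c.support.argmax d with
      | none => exact absurd (List.argmax_eq_none.mp h) c.support_ne_nil
      | some u => exact ⟨u, by simp [h, Option.mem_def]⟩
    have humem : u ∈ c.support := List.argmax_mem hu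
    have hmax : ∀ x ∈ c.support, d x ≤ d u := fun x hx => List.le_of_mem_argmax hx hu
    set c₂ := c.rotate u humem with hc₂def
    have hc₂ : c₂.IsCycle := hc.rotate humem
    have hsub : ∀ x, x ∈ c₂.support → d x ≤ d u := by
      intro x hx
      rcases (SimpleGraph.Walk.mem_support_iff _).mp hx with h | h
      · exact h ▸ le_rfl
      · exact hmax x ((SimpleGraph.Walk.mem_support_iff _).mpr
          (Or.inr ((c.support_rotate u humem).mem_iff.mp h)))
    -- a neighbour of u on the cycle must be `p u`
    have key : ∀ w, G.Adj u w → w ∈ c₂.support → w = p u := by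
      intro w hw hwmem
      rcases hb u w hw with ⟨_, h⟩ | ⟨hwr, h⟩
      · exact h.symm
      · exact absurd (hsub w hwmem) (by have := hd w hwr; rw [h] at this; omega)
    -- first dart
    cases hc₂eq : c₂ with
    | nil => exact hc₂.ne_nil (by rw [hc₂eq])
    | cons hadj t =>
      rename_i a
      have ha' : a = p u := key a hadj (by
        rw [hc₂eq, SimpleGraph.Walk.support_cons]
        exact List.mem_cons_of_mem _ t.start_mem_support)
      -- last dart via reverse
      cases hrev : c₂.reverse with
      | nil =>
        have : c₂ = SimpleGraph.Walk.nil := by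
          have := congrArg SimpleGraph.Walk.reverse hrev
          simpa using this
        exact hc₂.ne_nil this
      | cons hadj' t' =>
        rename_i b
        have hb' : b = p u := key b hadj' (by
          have : b ∈ c₂.reverse.support := by
            rw [hrev, SimpleGraph.Walk.support_cons]
            exact List.mem_cons_of_mem _ t'.start_mem_support
          rwa [SimpleGraph.Walk.support_reverse, List.mem_reverse] at this)
      -- now the first and last edges coincide
        have hedges : c₂.edges = s(u, a) :: t.edges := by rw [hc₂eq]; rfl
        have hrevedges : c₂.edges.reverse = s(u, b) :: t'.edges := by
          rw [← SimpleGraph.Walk.edges_reverse, hrev]; rfl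
        have hnodup := hc₂.edges_nodup
        rw [hedges] at hnodup
        have htne : t.edges ≠ [] := by
          intro h0
          cases t with
          | nil => exact G.loopless.irrefl u (ha' ▸ hadj)
          | cons h t'' => simp [SimpleGraph.Walk.edges_cons] at h0
        have heq : s(u, b) = s(u, a) := by rw [ha', hb']
        rw [heq] at hrevedges
        rw [hedges, List.reverse_cons] at hrevedges
        obtain ⟨x, xs, hx⟩ : ∃ x xs, t.edges.reverse = x :: xs := by
          cases hrx : t.edges.reverse with
          | nil => exact absurd (by simpa using congrArg List.reverse hrx) htne
          | cons x xs => exact ⟨x, xs, rfl⟩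
        rw [hx] at hrevedges
        have hxe : x = s(u, a) := by
          have := congrArg List.head? hrevedges
          simpa using this
        have : s(u, a) ∈ t.edges := by
          rw [← List.mem_reverse, hx]
          exact hxe ▸ List.mem_cons_self
        exact (List.nodup_cons.mp hnodup).1 this

end TreeLemma

section Core

variable {A : Type}
open Shape

/-- Pairs of vertices: left copy (under the dual) and right copy. -/
abbrev K (S : Shape A) : Type := Vtx S ⊕ Vtx S

/-- Switched in the left copy: positive tensor of `S`. -/
def swL {S : Shape A} (w : Vtx S) : Prop := IsTensorSh (subtreeAt w) ∧ vsign w = true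

/-- Switched in the right copy: negative tensor of `S`. -/
def swR {S : Shape A} (w : Vtx S) : Prop := IsTensorSh (subtreeAt w) ∧ vsign w = false

/-- The core adjacency relation of a switching of the identity on `S`. -/
def CoreRel {S : Shape A} (χ : K S → Bool) : K S → K S → Prop
  | .inl v, .inl w => parent v = some w ∧ (swL w → χ (.inl w) = sideOf v)
  | .inr v, .inr w => parent v = some w ∧ (swR w → χ (.inr w) = sideOf v)
  | .inl v, .inr w => vsign v = true ∧ IsAtom (subtreeAt v) ∧ v = w
  | .inr v, .inl w => vsign v = false ∧ IsAtom (subtreeAt v) ∧ v = w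

def iT {T U : Shape A} : K T → K (Shape.tensor T U) := Sum.map Vtx.tleft Vtx.tleft
def iU {T U : Shape A} : K U → K (Shape.tensor T U) := Sum.map Vtx.tright Vtx.tright
def iD {T : Shape A} : K T → K (Shape.dual T)
  | .inl v => .inr (.dchild v)
  | .inr v => .inl (.dchild v)

/-- Core parent function for the switching, rooted at the left root
(`c = false`) or right root (`c = true`). -/
def cp : (S : Shape A) → (K S → Bool) → Bool → K S → Option (K S)
  | .gen _, _, false, .inl _ => none
  | .gen _, _, false, .inr _ => some (.inl (.root _))
  | .gen _, _, true, .inr _ => none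
  | .gen _, _, true, .inl _ => some (.inr (.root _))
  | .unit, _, false, .inl _ => none
  | .unit, _, false, .inr _ => some (.inl (.root _))
  | .unit, _, true, .inr _ => none
  | .unit, _, true, .inl _ => some (.inr (.root _))
  | .dual T, χ, false, .inl (.root _) => none
  | .dual T, χ, false, .inr (.root _) => some (.inr (.dchild (.root _)))
  | .dual T, χ, false, .inl (.dchild v) =>
      some (((cp T (χ ∘ iD) true (.inr v)).map iD).getD (.inl (.root _)))
  | .dual T, χ, false, .inr (.dchild v) =>
      some (((cp T (χ ∘ iD) true (.inl v)).map iD).getD (.inl (.root _)))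
  | .dual T, χ, true, .inr (.root _) => none
  | .dual T, χ, true, .inl (.root _) => some (.inl (.dchild (.root _)))
  | .dual T, χ, true, .inl (.dchild v) =>
      some (((cp T (χ ∘ iD) false (.inr v)).map iD).getD (.inr (.root _)))
  | .dual T, χ, true, .inr (.dchild v) =>
      some (((cp T (χ ∘ iD) false (.inl v)).map iD).getD (.inr (.root _)))
  | .tensor T U, χ, false, .inl (.root _) => none
  | .tensor T U, χ, false, .inr (.root _) =>
      if χ (.inl (.root _)) then some (.inr (.tright (.root _)))
      else some (.inr (.tleft (.root _)))
  | .tensor T U, χ, false, .inl (.tleft v) =>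
      if χ (.inl (.root _)) then
        some (((cp T (χ ∘ iT) true (.inl v)).map iT).getD (.inr (.root _)))
      else
        some (((cp T (χ ∘ iT) false (.inl v)).map iT).getD (.inl (.root _)))
  | .tensor T U, χ, false, .inr (.tleft v) =>
      if χ (.inl (.root _)) then
        some (((cp T (χ ∘ iT) true (.inr v)).map iT).getD (.inr (.root _)))
      else
        some (((cp T (χ ∘ iT) false (.inr v)).map iT).getD (.inl (.root _)))
  | .tensor T U, χ, false, .inl (.tright v) =>
      if χ (.inl (.root _)) then
        some (((cp U (χ ∘ iU) false (.inl v)).map iU).getD (.inl (.root _)))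
      else
        some (((cp U (χ ∘ iU) true (.inl v)).map iU).getD (.inr (.root _)))
  | .tensor T U, χ, false, .inr (.tright v) =>
      if χ (.inl (.root _)) then
        some (((cp U (χ ∘ iU) false (.inr v)).map iU).getD (.inl (.root _)))
      else
        some (((cp U (χ ∘ iU) true (.inr v)).map iU).getD (.inr (.root _)))
  | .tensor T U, χ, true, .inr (.root _) => none
  | .tensor T U, χ, true, .inl (.root _) =>
      if χ (.inl (.root _)) then some (.inl (.tright (.root _)))
      else some (.inl (.tleft (.root _)))
  | .tensor T U, χ, true, .inl (.tleft v) =>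
      some (((cp T (χ ∘ iT) true (.inl v)).map iT).getD (.inr (.root _)))
  | .tensor T U, χ, true, .inr (.tleft v) =>
      some (((cp T (χ ∘ iT) true (.inr v)).map iT).getD (.inr (.root _)))
  | .tensor T U, χ, true, .inl (.tright v) =>
      some (((cp U (χ ∘ iU) true (.inl v)).map iU).getD (.inr (.root _)))
  | .tensor T U, χ, true, .inr (.tright v) =>
      some (((cp U (χ ∘ iU) true (.inr v)).map iU).getD (.inr (.root _)))

/-- Core depth function. -/
def cd : (S : Shape A) → (K S → Bool) → Bool → K S → ℕ
  | .gen _, _, false, .inl _ => 0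
  | .gen _, _, false, .inr _ => 1
  | .gen _, _, true, .inr _ => 0
  | .gen _, _, true, .inl _ => 1
  | .unit, _, false, .inl _ => 0
  | .unit, _, false, .inr _ => 1
  | .unit, _, true, .inr _ => 0
  | .unit, _, true, .inl _ => 1
  | .dual T, χ, false, .inl (.root _) => 0
  | .dual T, χ, false, .inl (.dchild v) => cd T (χ ∘ iD) true (.inr v) + 1
  | .dual T, χ, false, .inr (.dchild v) => cd T (χ ∘ iD) true (.inl v) + 1
  | .dual T, χ, false, .inr (.root _) => cd T (χ ∘ iD) true (.inl (.root _)) + 2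
  | .dual T, χ, true, .inr (.root _) => 0
  | .dual T, χ, true, .inr (.dchild v) => cd T (χ ∘ iD) false (.inl v) + 1
  | .dual T, χ, true, .inl (.dchild v) => cd T (χ ∘ iD) false (.inr v) + 1
  | .dual T, χ, true, .inl (.root _) => cd T (χ ∘ iD) false (.inr (.root _)) + 2
  | .tensor T U, χ, false, .inl (.root _) => 0
  | .tensor T U, χ, false, .inl (.tleft v) =>
      if χ (.inl (.root _)) then
        cd T (χ ∘ iT) true (.inl v) + cd U (χ ∘ iU) false (.inr (.root _)) + 3
      else cd T (χ ∘ iT) false (.inl v) + 1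
  | .tensor T U, χ, false, .inr (.tleft v) =>
      if χ (.inl (.root _)) then
        cd T (χ ∘ iT) true (.inr v) + cd U (χ ∘ iU) false (.inr (.root _)) + 3
      else cd T (χ ∘ iT) false (.inr v) + 1
  | .tensor T U, χ, false, .inl (.tright v) =>
      if χ (.inl (.root _)) then cd U (χ ∘ iU) false (.inl v) + 1
      else cd U (χ ∘ iU) true (.inl v) + cd T (χ ∘ iT) false (.inr (.root _)) + 3
  | .tensor T U, χ, false, .inr (.tright v) =>
      if χ (.inl (.root _)) then cd U (χ ∘ iU) false (.inr v) + 1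
      else cd U (χ ∘ iU) true (.inr v) + cd T (χ ∘ iT) false (.inr (.root _)) + 3
  | .tensor T U, χ, false, .inr (.root _) =>
      if χ (.inl (.root _)) then cd U (χ ∘ iU) false (.inr (.root _)) + 2
      else cd T (χ ∘ iT) false (.inr (.root _)) + 2
  | .tensor T U, χ, true, .inr (.root _) => 0
  | .tensor T U, χ, true, .inl (.tleft v) => cd T (χ ∘ iT) true (.inl v) + 1
  | .tensor T U, χ, true, .inr (.tleft v) => cd T (χ ∘ iT) true (.inr v) + 1
  | .tensor T U, χ, true, .inl (.tright v) => cd U (χ ∘ iU) true (.inl v) + 1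
  | .tensor T U, χ, true, .inr (.tright v) => cd U (χ ∘ iU) true (.inr v) + 1
  | .tensor T U, χ, true, .inl (.root _) =>
      if χ (.inl (.root _)) then cd U (χ ∘ iU) true (.inl (.root _)) + 2
      else cd T (χ ∘ iT) true (.inl (.root _)) + 2

end Core


section CoreLemmas

variable {A : Type}
open Shape

@[simp] lemma vsign_tleft {T U : Shape A} (v : Vtx T) :
    vsign (Vtx.tleft (T := U) v) = vsign v := rfl
@[simp] lemma vsign_tright {T U : Shape A} (v : Vtx U) :
    vsign (Vtx.tright (S := T) v) = vsign v := rfl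
@[simp] lemma vsign_dchild {T : Shape A} (v : Vtx T) :
    vsign (Vtx.dchild v) = !vsign v := rfl
@[simp] lemma subtreeAt_tleft {T U : Shape A} (v : Vtx T) :
    subtreeAt (Vtx.tleft (T := U) v) = subtreeAt v := rfl
@[simp] lemma subtreeAt_tright {T U : Shape A} (v : Vtx U) :
    subtreeAt (Vtx.tright (S := T) v) = subtreeAt v := rfl
@[simp] lemma subtreeAt_dchild {T : Shape A} (v : Vtx T) :
    subtreeAt (Vtx.dchild v) = subtreeAt v := rfl

@[simp] lemma sideOf_dchild {T : Shape A} (v : Vtx T) :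
    sideOf (Vtx.dchild v) = sideOf v := by cases v <;> rfl

lemma sideOf_tleft {T U : Shape A} (v : Vtx T) (hv : v ≠ Vtx.root T) :
    sideOf (Vtx.tleft (T := U) v) = sideOf v := by
  cases v <;> first | exact absurd rfl hv | rfl

lemma sideOf_tright {T U : Shape A} (v : Vtx U) (hv : v ≠ Vtx.root U) :
    sideOf (Vtx.tright (S := T) v) = sideOf v := by
  cases v <;> first | exact absurd rfl hv | rfl

lemma parent_eq_none {S : Shape A} (v : Vtx S) :
    parent v = none ↔ v = Vtx.root S := by
  cases v <;> simp [parent]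

lemma parent_tleft {T U : Shape A} (v : Vtx T) :
    parent (Vtx.tleft (T := U) v) =
      some (match parent v with | none => .root _ | some p => .tleft p) := rfl
lemma parent_tright {T U : Shape A} (v : Vtx U) :
    parent (Vtx.tright (S := T) v) =
      some (match parent v with | none => .root _ | some p => .tright p) := rfl
lemma parent_dchild {T : Shape A} (v : Vtx T) :
    parent (Vtx.dchild v) =
      some (match parent v with | none => .root _ | some p => .dchild p) := rfl

lemma parent_tleft_iff {T U : Shape A} (v w : Vtx T) :
    parent (Vtx.tleft (T := U) v) = some (Vtx.tleft w) ↔ parent v = some w := by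
  rw [parent_tleft]
  cases hp : parent v <;> simp

lemma parent_tleft_root_iff {T U : Shape A} (v : Vtx T) :
    parent (Vtx.tleft (T := U) v) = some (Vtx.root _) ↔ v = Vtx.root T := by
  rw [parent_tleft, ← parent_eq_none]
  cases hp : parent v <;> simp

lemma parent_tright_iff {T U : Shape A} (v w : Vtx U) :
    parent (Vtx.tright (S := T) v) = some (Vtx.tright w) ↔ parent v = some w := by
  rw [parent_tright]
  cases hp : parent v <;> simp

lemma parent_tright_root_iff {T U : Shape A} (v : Vtx U) :
    parent (Vtx.tright (S := T) v) = some (Vtx.root _) ↔ v = Vtx.root U := by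
  rw [parent_tright, ← parent_eq_none]
  cases hp : parent v <;> simp

lemma parent_dchild_iff {T : Shape A} (v w : Vtx T) :
    parent (Vtx.dchild v) = some (Vtx.dchild w) ↔ parent v = some w := by
  rw [parent_dchild]
  cases hp : parent v <;> simp

lemma parent_dchild_root_iff {T : Shape A} (v : Vtx T) :
    parent (Vtx.dchild v) = some (Vtx.root _) ↔ v = Vtx.root T := by
  rw [parent_dchild, ← parent_eq_none]
  cases hp : parent v <;> simp

lemma parent_tleft_ne_tright {T U : Shape A} (v : Vtx T) (w : Vtx U) :
    parent (Vtx.tleft v) ≠ some (Vtx.tright w) := by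
  rw [parent_tleft]
  cases hp : parent v <;> simp

lemma parent_tright_ne_tleft {T U : Shape A} (v : Vtx U) (w : Vtx T) :
    parent (Vtx.tright v) ≠ some (Vtx.tleft w) := by
  rw [parent_tright]
  cases hp : parent v <;> simp

end CoreLemmas


section Embed

variable {A : Type}
open Shape

lemma swL_tleft {T U : Shape A} (w : Vtx T) : swL (Vtx.tleft (T := U) w) ↔ swL w := by
  simp [swL]
lemma swL_tright {T U : Shape A} (w : Vtx U) : swL (Vtx.tright (S := T) w) ↔ swL w := by
  simp [swL]
lemma swR_tleft {T U : Shape A} (w : Vtx T) : swR (Vtx.tleft (T := U) w) ↔ swR w := by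
  simp [swR]
lemma swR_tright {T U : Shape A} (w : Vtx U) : swR (Vtx.tright (S := T) w) ↔ swR w := by
  simp [swR]
lemma swL_dchild {T : Shape A} (w : Vtx T) : swL (Vtx.dchild w) ↔ swR w := by
  simp [swL, swR]
lemma swR_dchild {T : Shape A} (w : Vtx T) : swR (Vtx.dchild w) ↔ swL w := by
  simp [swR, swL]

lemma coreRel_iT {T U : Shape A} (χ : K (Shape.tensor T U) → Bool) (x y : K T) :
    CoreRel χ (iT x) (iT y) ↔ CoreRel (χ ∘ iT) x y := by
  cases x with
  | inl v =>
    cases y with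
    | inl w =>
      show (parent (Vtx.tleft v) = some (Vtx.tleft w) ∧ _) ↔ (parent v = some w ∧ _)
      constructor
      · rintro ⟨h1, h2⟩
        have h1' := (parent_tleft_iff (U := U) v w).mp h1
        have hv : v ≠ Vtx.root T := fun h => by
          rw [h] at h1'; simp [parent] at h1'
        exact ⟨h1', fun hs => by
          have := h2 ((swL_tleft w).mpr hs)
          rwa [sideOf_tleft v hv] at this⟩
      · rintro ⟨h1, h2⟩
        have hv : v ≠ Vtx.root T := fun h => by
          rw [h] at h1; simp [parent] at h1
        exact ⟨(parent_tleft_iff (U := U) v w).mpr h1, fun hs => by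
          rw [sideOf_tleft v hv]; exact h2 ((swL_tleft w).mp hs)⟩
    | inr w =>
      show (vsign (Vtx.tleft v) = true ∧ IsAtom (subtreeAt (Vtx.tleft v)) ∧
          Vtx.tleft v = Vtx.tleft w) ↔ _
      simp only [vsign_tleft, subtreeAt_tleft]
      show _ ↔ (vsign v = true ∧ IsAtom (subtreeAt v) ∧ v = w)
      constructor
      · rintro ⟨h1, h2, h3⟩
        cases h3
        exact ⟨h1, h2, rfl⟩
      · rintro ⟨h1, h2, rfl⟩
        exact ⟨h1, h2, rfl⟩
  | inr v =>
    cases y with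
    | inl w =>
      show (vsign (Vtx.tleft v) = false ∧ IsAtom (subtreeAt (Vtx.tleft v)) ∧
          Vtx.tleft v = Vtx.tleft w) ↔ _
      simp only [vsign_tleft, subtreeAt_tleft]
      show _ ↔ (vsign v = false ∧ IsAtom (subtreeAt v) ∧ v = w)
      constructor
      · rintro ⟨h1, h2, h3⟩
        cases h3
        exact ⟨h1, h2, rfl⟩
      · rintro ⟨h1, h2, rfl⟩
        exact ⟨h1, h2, rfl⟩
    | inr w =>
      show (parent (Vtx.tleft v) = some (Vtx.tleft w) ∧ _) ↔ (parent v = some w ∧ _)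
      constructor
      · rintro ⟨h1, h2⟩
        have h1' := (parent_tleft_iff (U := U) v w).mp h1
        have hv : v ≠ Vtx.root T := fun h => by
          rw [h] at h1'; simp [parent] at h1'
        exact ⟨h1', fun hs => by
          have := h2 ((swR_tleft w).mpr hs)
          rwa [sideOf_tleft v hv] at this⟩
      · rintro ⟨h1, h2⟩
        have hv : v ≠ Vtx.root T := fun h => by
          rw [h] at h1; simp [parent] at h1
        exact ⟨(parent_tleft_iff (U := U) v w).mpr h1, fun hs => by
          rw [sideOf_tleft v hv]; exact h2 ((swR_tleft w).mp hs)⟩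


lemma coreRel_iU {T U : Shape A} (χ : K (Shape.tensor T U) → Bool) (x y : K U) :
    CoreRel χ (iU x) (iU y) ↔ CoreRel (χ ∘ iU) x y := by
  cases x with
  | inl v =>
    cases y with
    | inl w =>
      show (parent (Vtx.tright v) = some (Vtx.tright w) ∧ _) ↔ (parent v = some w ∧ _)
      constructor
      · rintro ⟨h1, h2⟩
        have h1' := (parent_tright_iff (T := T) v w).mp h1
        have hv : v ≠ Vtx.root U := fun h => by
          rw [h] at h1'; simp [parent] at h1'
        exact ⟨h1', fun hs => by
          have := h2 ((swL_tright w).mpr hs)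
          rwa [sideOf_tright v hv] at this⟩
      · rintro ⟨h1, h2⟩
        have hv : v ≠ Vtx.root U := fun h => by
          rw [h] at h1; simp [parent] at h1
        exact ⟨(parent_tright_iff (T := T) v w).mpr h1, fun hs => by
          rw [sideOf_tright v hv]; exact h2 ((swL_tright w).mp hs)⟩
    | inr w =>
      show (vsign (Vtx.tright v) = true ∧ IsAtom (subtreeAt (Vtx.tright v)) ∧
          Vtx.tright v = Vtx.tright w) ↔ _
      simp only [vsign_tright, subtreeAt_tright]
      show _ ↔ (vsign v = true ∧ IsAtom (subtreeAt v) ∧ v = w)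
      constructor
      · rintro ⟨h1, h2, h3⟩
        cases h3
        exact ⟨h1, h2, rfl⟩
      · rintro ⟨h1, h2, rfl⟩
        exact ⟨h1, h2, rfl⟩
  | inr v =>
    cases y with
    | inl w =>
      show (vsign (Vtx.tright v) = false ∧ IsAtom (subtreeAt (Vtx.tright v)) ∧
          Vtx.tright v = Vtx.tright w) ↔ _
      simp only [vsign_tright, subtreeAt_tright]
      show _ ↔ (vsign v = false ∧ IsAtom (subtreeAt v) ∧ v = w)
      constructor
      · rintro ⟨h1, h2, h3⟩
        cases h3
        exact ⟨h1, h2, rfl⟩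
      · rintro ⟨h1, h2, rfl⟩
        exact ⟨h1, h2, rfl⟩
    | inr w =>
      show (parent (Vtx.tright v) = some (Vtx.tright w) ∧ _) ↔ (parent v = some w ∧ _)
      constructor
      · rintro ⟨h1, h2⟩
        have h1' := (parent_tright_iff (T := T) v w).mp h1
        have hv : v ≠ Vtx.root U := fun h => by
          rw [h] at h1'; simp [parent] at h1'
        exact ⟨h1', fun hs => by
          have := h2 ((swR_tright w).mpr hs)
          rwa [sideOf_tright v hv] at this⟩
      · rintro ⟨h1, h2⟩
        have hv : v ≠ Vtx.root U := fun h => by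
          rw [h] at h1; simp [parent] at h1
        exact ⟨(parent_tright_iff (T := T) v w).mpr h1, fun hs => by
          rw [sideOf_tright v hv]; exact h2 ((swR_tright w).mp hs)⟩

lemma coreRel_iD {T : Shape A} (χ : K (Shape.dual T) → Bool) (x y : K T) :
    CoreRel χ (iD x) (iD y) ↔ CoreRel (χ ∘ iD) x y := by
  cases x with
  | inl v =>
    cases y with
    | inl w =>
      show (parent (Vtx.dchild v) = some (Vtx.dchild w) ∧ _) ↔ (parent v = some w ∧ _)
      constructor
      · rintro ⟨h1, h2⟩
        refine ⟨(parent_dchild_iff v w).mp h1, fun hs => ?_⟩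
        have := h2 ((swR_dchild w).mpr hs)
        rwa [sideOf_dchild v] at this
      · rintro ⟨h1, h2⟩
        exact ⟨(parent_dchild_iff v w).mpr h1, fun hs => by
          rw [sideOf_dchild v]; exact h2 ((swR_dchild w).mp hs)⟩
    | inr w =>
      show (vsign (Vtx.dchild v) = false ∧ IsAtom (subtreeAt (Vtx.dchild v)) ∧
          Vtx.dchild v = Vtx.dchild w) ↔ _
      simp only [vsign_dchild, subtreeAt_dchild, Bool.not_eq_false']
      show _ ↔ (vsign v = true ∧ IsAtom (subtreeAt v) ∧ v = w)
      constructor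
      · rintro ⟨h1, h2, h3⟩
        cases h3
        exact ⟨h1, h2, rfl⟩
      · rintro ⟨h1, h2, rfl⟩
        exact ⟨h1, h2, rfl⟩
  | inr v =>
    cases y with
    | inl w =>
      show (vsign (Vtx.dchild v) = true ∧ IsAtom (subtreeAt (Vtx.dchild v)) ∧
          Vtx.dchild v = Vtx.dchild w) ↔ _
      simp only [vsign_dchild, subtreeAt_dchild, Bool.not_eq_true']
      show _ ↔ (vsign v = false ∧ IsAtom (subtreeAt v) ∧ v = w)
      constructor
      · rintro ⟨h1, h2, h3⟩
        cases h3
        exact ⟨h1, h2, rfl⟩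
      · rintro ⟨h1, h2, rfl⟩
        exact ⟨h1, h2, rfl⟩
    | inr w =>
      show (parent (Vtx.dchild v) = some (Vtx.dchild w) ∧ _) ↔ (parent v = some w ∧ _)
      constructor
      · rintro ⟨h1, h2⟩
        refine ⟨(parent_dchild_iff v w).mp h1, fun hs => ?_⟩
        have := h2 ((swL_dchild w).mpr hs)
        rwa [sideOf_dchild v] at this
      · rintro ⟨h1, h2⟩
        exact ⟨(parent_dchild_iff v w).mpr h1, fun hs => by
          rw [sideOf_dchild v]; exact h2 ((swL_dchild w).mp hs)⟩

end Embed


section Invariants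

variable {A : Type}
open Shape

/-- The entry vertex. -/
def eV (S : Shape A) (c : Bool) : K S := cond c (.inr (.root S)) (.inl (.root S))

lemma cp_eq_none {S : Shape A} (χ : K S → Bool) (c : Bool) (k : K S) :
    cp S χ c k = none ↔ k = eV S c := by
  cases S <;> cases c <;> rcases k with v | v <;> cases v <;>
    simp [cp, eV] <;> split <;> simp


lemma cd_step {X S : Shape A} {χ' : K X → Bool} {c' : Bool} {f : K X → K S}
    {dflt : K S} {cdS : K S → ℕ} (x : K X)
    (ih : ∀ k k', cp X χ' c' k = some k' → cd X χ' c' k' < cd X χ' c' k)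
    (hmap : ∀ z y : K X, cd X χ' c' y < cd X χ' c' z → cdS (f y) < cdS (f z))
    (hdflt : x = eV X c' → cdS dflt < cdS (f x)) :
    cdS (((cp X χ' c' x).map f).getD dflt) < cdS (f x) := by
  cases hsub : cp X χ' c' x with
  | some y => simpa using hmap x y (ih x y hsub)
  | none => simpa using hdflt ((cp_eq_none _ _ _).mp hsub)

lemma cd_lt : ∀ (S : Shape A) (χ : K S → Bool) (c : Bool) (k k' : K S),
    cp S χ c k = some k' → cd S χ c k' < cd S χ c k := by
  intro S
  induction S with
  | gen a =>
    intro χ c k k' h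
    rcases k with v | v <;> cases v <;> cases c <;>
      simp only [cp] at h <;> cases h <;> simp [cd]
  | unit =>
    intro χ c k k' h
    rcases k with v | v <;> cases v <;> cases c <;>
      simp only [cp] at h <;> cases h <;> simp [cd]
  | dual T ih =>
    intro χ c k k' h
    have hmap : ∀ (c' : Bool) (z y : K T),
        cd T (χ ∘ iD) c' y < cd T (χ ∘ iD) c' z →
        cd (Shape.dual T) χ (!c') (iD y) < cd (Shape.dual T) χ (!c') (iD z) := by
      intro c' z y hzy
      rcases z with z | z <;> rcases y with y' | y' <;> cases c' <;>
        simpa [cd, iD] using hzy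
    rcases k with v | v
    · cases v with
      | root =>
        cases c with
        | false => simp [cp] at h
        | true => simp only [cp] at h; cases h; simp [cd]
      | dchild v =>
        cases c with
        | false =>
          simp only [cp] at h; cases h
          exact cd_step (f := iD) (cdS := cd (Shape.dual T) χ false) (.inr v) (ih _ _)
            (by simpa using hmap true)
            (by intro hx
                have : v = Vtx.root T := by simpa [eV] using hx
                subst this; simp [cd, iD]; first | done | omega)
        | true =>
          simp only [cp] at h; cases h
          exact cd_step (f := iD) (cdS := cd (Shape.dual T) χ true) (.inr v) (ih _ _)
            (by simpa using hmap false)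
            (by intro hx; simp [eV] at hx)
    · cases v with
      | root =>
        cases c with
        | true => simp [cp] at h
        | false => simp only [cp] at h; cases h; simp [cd]
      | dchild v =>
        cases c with
        | false =>
          simp only [cp] at h; cases h
          exact cd_step (f := iD) (cdS := cd (Shape.dual T) χ false) (.inl v) (ih _ _)
            (by simpa using hmap true)
            (by intro hx; simp [eV] at hx)
        | true =>
          simp only [cp] at h; cases h
          exact cd_step (f := iD) (cdS := cd (Shape.dual T) χ true) (.inl v) (ih _ _)
            (by simpa using hmap false)
            (by intro hx
                have : v = Vtx.root T := by simpa [eV] using hx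
                subst this; simp [cd, iD]; first | done | omega)
  | tensor T U ihT ihU =>
    intro χ c k k' h
    cases hb : χ (.inl (.root _)) with
    | false =>
      have hmT : ∀ (c₀ c' : Bool) (z y : K T),
          cd T (χ ∘ iT) c' y < cd T (χ ∘ iT) c' z →
          (c₀ = false → c' = false) → (c₀ = true → c' = true) →
          cd (Shape.tensor T U) χ c₀ (iT y) < cd (Shape.tensor T U) χ c₀ (iT z) := by
        intro c₀ c' z y hzy h1 h2
        cases c₀ <;> [rw [h1 rfl] at hzy; rw [h2 rfl] at hzy] <;>
          rcases z with z | z <;> rcases y with y' | y' <;>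
          (simp only [iT, Sum.map] at hzy; simp [cd, iT, Sum.map, hb]; first | done | omega)
      have hmU : ∀ (c₀ c' : Bool) (z y : K U),
          cd U (χ ∘ iU) c' y < cd U (χ ∘ iU) c' z →
          (c₀ = false → c' = true) → (c₀ = true → c' = true) →
          cd (Shape.tensor T U) χ c₀ (iU y) < cd (Shape.tensor T U) χ c₀ (iU z) := by
        intro c₀ c' z y hzy h1 h2
        cases c₀ <;> [rw [h1 rfl] at hzy; rw [h2 rfl] at hzy] <;>
          rcases z with z | z <;> rcases y with y' | y' <;>
          (simp only [iU, Sum.map] at hzy; simp [cd, iU, Sum.map, hb]; first | done | omega)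
      rcases k with v | v
      · cases v with
        | root =>
          cases c with
          | false => simp [cp, hb] at h
          | true => simp only [cp, hb] at h; simp at h; cases h; simp [cd, hb]
        | tleft v =>
          cases c with
          | false =>
            simp only [cp, hb] at h; simp at h; cases h
            exact cd_step (f := iT) (cdS := cd (Shape.tensor T U) χ false) (.inl v) (ihT _ _)
              (fun z y hzy => hmT false false z y hzy (fun _ => rfl) (fun hf => by cases hf))
              (by intro hx
                  have : v = Vtx.root T := by simpa [eV] using hx
                  subst this; simp [cd, iT, Sum.map, hb]; first | done | omega)
          | true =>
            simp only [cp, hb] at h; cases h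
            exact cd_step (f := iT) (cdS := cd (Shape.tensor T U) χ true) (.inl v) (ihT _ _)
              (fun z y hzy => hmT true true z y hzy (fun hf => by cases hf) (fun _ => rfl))
              (by intro hx; simp [eV] at hx)
        | tright v =>
          cases c with
          | false =>
            simp only [cp, hb] at h; simp at h; cases h
            exact cd_step (f := iU) (cdS := cd (Shape.tensor T U) χ false) (.inl v) (ihU _ _)
              (fun z y hzy => hmU false true z y hzy (fun _ => rfl) (fun hf => by cases hf))
              (by intro hx; simp [eV] at hx)
          | true =>
            simp only [cp, hb] at h; cases h
            exact cd_step (f := iU) (cdS := cd (Shape.tensor T U) χ true) (.inl v) (ihU _ _)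
              (fun z y hzy => hmU true true z y hzy (fun hf => by cases hf) (fun _ => rfl))
              (by intro hx; simp [eV] at hx)
      · cases v with
        | root =>
          cases c with
          | true => simp [cp, hb] at h
          | false => simp only [cp, hb] at h; simp at h; cases h; simp [cd, hb]
        | tleft v =>
          cases c with
          | false =>
            simp only [cp, hb] at h; simp at h; cases h
            exact cd_step (f := iT) (cdS := cd (Shape.tensor T U) χ false) (.inr v) (ihT _ _)
              (fun z y hzy => hmT false false z y hzy (fun _ => rfl) (fun hf => by cases hf))
              (by intro hx; simp [eV] at hx)
          | true =>
            simp only [cp, hb] at h; cases h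
            exact cd_step (f := iT) (cdS := cd (Shape.tensor T U) χ true) (.inr v) (ihT _ _)
              (fun z y hzy => hmT true true z y hzy (fun hf => by cases hf) (fun _ => rfl))
              (by intro hx
                  have : v = Vtx.root T := by simpa [eV] using hx
                  subst this; simp [cd, iT, Sum.map, hb]; first | done | omega)
        | tright v =>
          cases c with
          | false =>
            simp only [cp, hb] at h; simp at h; cases h
            exact cd_step (f := iU) (cdS := cd (Shape.tensor T U) χ false) (.inr v) (ihU _ _)
              (fun z y hzy => hmU false true z y hzy (fun _ => rfl) (fun hf => by cases hf))
              (by intro hx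
                  have : v = Vtx.root U := by simpa [eV] using hx
                  subst this; simp [cd, iU, Sum.map, hb]; first | done | omega)
          | true =>
            simp only [cp, hb] at h; cases h
            exact cd_step (f := iU) (cdS := cd (Shape.tensor T U) χ true) (.inr v) (ihU _ _)
              (fun z y hzy => hmU true true z y hzy (fun hf => by cases hf) (fun _ => rfl))
              (by intro hx
                  have : v = Vtx.root U := by simpa [eV] using hx
                  subst this; simp [cd, iU, Sum.map, hb]; first | done | omega)
    | true =>
      have hmT : ∀ (c₀ c' : Bool) (z y : K T),
          cd T (χ ∘ iT) c' y < cd T (χ ∘ iT) c' z →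
          c' = true →
          cd (Shape.tensor T U) χ c₀ (iT y) < cd (Shape.tensor T U) χ c₀ (iT z) := by
        intro c₀ c' z y hzy h1
        subst h1
        cases c₀ <;> rcases z with z | z <;> rcases y with y' | y' <;>
          (simp only [iT, Sum.map] at hzy; simp [cd, iT, Sum.map, hb]; first | done | omega)
      have hmU : ∀ (c₀ c' : Bool) (z y : K U),
          cd U (χ ∘ iU) c' y < cd U (χ ∘ iU) c' z →
          (c₀ = false → c' = false) → (c₀ = true → c' = true) →
          cd (Shape.tensor T U) χ c₀ (iU y) < cd (Shape.tensor T U) χ c₀ (iU z) := by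
        intro c₀ c' z y hzy h1 h2
        cases c₀ <;> [rw [h1 rfl] at hzy; rw [h2 rfl] at hzy] <;>
          rcases z with z | z <;> rcases y with y' | y' <;>
          (simp only [iU, Sum.map] at hzy; simp [cd, iU, Sum.map, hb]; first | done | omega)
      rcases k with v | v
      · cases v with
        | root =>
          cases c with
          | false => simp [cp, hb] at h
          | true => simp only [cp, hb] at h; simp at h; cases h; simp [cd, hb]
        | tleft v =>
          cases c with
          | false =>
            simp only [cp, hb] at h; simp at h; cases h
            exact cd_step (f := iT) (cdS := cd (Shape.tensor T U) χ false) (.inl v) (ihT _ _)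
              (fun z y hzy => hmT false true z y hzy rfl)
              (by intro hx; simp [eV] at hx)
          | true =>
            simp only [cp, hb] at h; cases h
            exact cd_step (f := iT) (cdS := cd (Shape.tensor T U) χ true) (.inl v) (ihT _ _)
              (fun z y hzy => hmT true true z y hzy rfl)
              (by intro hx; simp [eV] at hx)
        | tright v =>
          cases c with
          | false =>
            simp only [cp, hb] at h; simp at h; cases h
            exact cd_step (f := iU) (cdS := cd (Shape.tensor T U) χ false) (.inl v) (ihU _ _)
              (fun z y hzy => hmU false false z y hzy (fun _ => rfl) (fun hf => by cases hf))
              (by intro hx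
                  have : v = Vtx.root U := by simpa [eV] using hx
                  subst this; simp [cd, iU, Sum.map, hb]; first | done | omega)
          | true =>
            simp only [cp, hb] at h; cases h
            exact cd_step (f := iU) (cdS := cd (Shape.tensor T U) χ true) (.inl v) (ihU _ _)
              (fun z y hzy => hmU true true z y hzy (fun hf => by cases hf) (fun _ => rfl))
              (by intro hx; simp [eV] at hx)
      · cases v with
        | root =>
          cases c with
          | true => simp [cp, hb] at h
          | false => simp only [cp, hb] at h; simp at h; cases h; simp [cd, hb]
        | tleft v =>
          cases c with
          | false =>
            simp only [cp, hb] at h; simp at h; cases h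
            exact cd_step (f := iT) (cdS := cd (Shape.tensor T U) χ false) (.inr v) (ihT _ _)
              (fun z y hzy => hmT false true z y hzy rfl)
              (by intro hx
                  have : v = Vtx.root T := by simpa [eV] using hx
                  subst this; simp [cd, iT, Sum.map, hb]; first | done | omega)
          | true =>
            simp only [cp, hb] at h; cases h
            exact cd_step (f := iT) (cdS := cd (Shape.tensor T U) χ true) (.inr v) (ihT _ _)
              (fun z y hzy => hmT true true z y hzy rfl)
              (by intro hx
                  have : v = Vtx.root T := by simpa [eV] using hx
                  subst this; simp [cd, iT, Sum.map, hb]; first | done | omega)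
        | tright v =>
          cases c with
          | false =>
            simp only [cp, hb] at h; simp at h; cases h
            exact cd_step (f := iU) (cdS := cd (Shape.tensor T U) χ false) (.inr v) (ihU _ _)
              (fun z y hzy => hmU false false z y hzy (fun _ => rfl) (fun hf => by cases hf))
              (by intro hx; simp [eV] at hx)
          | true =>
            simp only [cp, hb] at h; cases h
            exact cd_step (f := iU) (cdS := cd (Shape.tensor T U) χ true) (.inr v) (ihU _ _)
              (fun z y hzy => hmU true true z y hzy (fun hf => by cases hf) (fun _ => rfl))
              (by intro hx
                  have : v = Vtx.root U := by simpa [eV] using hx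
                  subst this; simp [cd, iU, Sum.map, hb]; first | done | omega)


lemma adj_stepT {T U : Shape A} (χ : K (Shape.tensor T U) → Bool) (c' : Bool) (x : K T)
    {dflt : K (Shape.tensor T U)}
    (ih : ∀ (χ' : K T → Bool) (c : Bool) (k k' : K T),
      cp T χ' c k = some k' → CoreRel χ' k k' ∨ CoreRel χ' k' k)
    (hdflt : x = eV T c' → CoreRel χ (iT x) dflt ∨ CoreRel χ dflt (iT x)) :
    CoreRel χ (iT x) (((cp T (χ ∘ iT) c' x).map iT).getD dflt) ∨
    CoreRel χ (((cp T (χ ∘ iT) c' x).map iT).getD dflt) (iT x) := by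
  cases hsub : cp T (χ ∘ iT) c' x with
  | some y =>
    simp only [Option.map_some, Option.getD_some]
    rcases ih _ _ _ _ hsub with h | h
    · exact Or.inl ((coreRel_iT χ x y).mpr h)
    · exact Or.inr ((coreRel_iT χ y x).mpr h)
  | none =>
    simp only [Option.map_none, Option.getD_none]
    exact hdflt ((cp_eq_none _ _ _).mp hsub)

lemma adj_stepU {T U : Shape A} (χ : K (Shape.tensor T U) → Bool) (c' : Bool) (x : K U)
    {dflt : K (Shape.tensor T U)}
    (ih : ∀ (χ' : K U → Bool) (c : Bool) (k k' : K U),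
      cp U χ' c k = some k' → CoreRel χ' k k' ∨ CoreRel χ' k' k)
    (hdflt : x = eV U c' → CoreRel χ (iU x) dflt ∨ CoreRel χ dflt (iU x)) :
    CoreRel χ (iU x) (((cp U (χ ∘ iU) c' x).map iU).getD dflt) ∨
    CoreRel χ (((cp U (χ ∘ iU) c' x).map iU).getD dflt) (iU x) := by
  cases hsub : cp U (χ ∘ iU) c' x with
  | some y =>
    simp only [Option.map_some, Option.getD_some]
    rcases ih _ _ _ _ hsub with h | h
    · exact Or.inl ((coreRel_iU χ x y).mpr h)
    · exact Or.inr ((coreRel_iU χ y x).mpr h)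
  | none =>
    simp only [Option.map_none, Option.getD_none]
    exact hdflt ((cp_eq_none _ _ _).mp hsub)

lemma adj_stepD {T : Shape A} (χ : K (Shape.dual T) → Bool) (c' : Bool) (x : K T)
    {dflt : K (Shape.dual T)}
    (ih : ∀ (χ' : K T → Bool) (c : Bool) (k k' : K T),
      cp T χ' c k = some k' → CoreRel χ' k k' ∨ CoreRel χ' k' k)
    (hdflt : x = eV T c' → CoreRel χ (iD x) dflt ∨ CoreRel χ dflt (iD x)) :
    CoreRel χ (iD x) (((cp T (χ ∘ iD) c' x).map iD).getD dflt) ∨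
    CoreRel χ (((cp T (χ ∘ iD) c' x).map iD).getD dflt) (iD x) := by
  cases hsub : cp T (χ ∘ iD) c' x with
  | some y =>
    simp only [Option.map_some, Option.getD_some]
    rcases ih _ _ _ _ hsub with h | h
    · exact Or.inl ((coreRel_iD χ x y).mpr h)
    · exact Or.inr ((coreRel_iD χ y x).mpr h)
  | none =>
    simp only [Option.map_none, Option.getD_none]
    exact hdflt ((cp_eq_none _ _ _).mp hsub)

lemma cp_adj : ∀ (S : Shape A) (χ : K S → Bool) (c : Bool) (k k' : K S),
    cp S χ c k = some k' → CoreRel χ k k' ∨ CoreRel χ k' k := by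
  intro S
  induction S with
  | gen a =>
    intro χ c k k' h
    rcases k with v | v <;> cases v <;> cases c <;>
      simp only [cp] at h <;> cases h
    · exact Or.inl ⟨rfl, trivial, rfl⟩
    · exact Or.inr ⟨rfl, trivial, rfl⟩
  | unit =>
    intro χ c k k' h
    rcases k with v | v <;> cases v <;> cases c <;>
      simp only [cp] at h <;> cases h
    · exact Or.inl ⟨rfl, trivial, rfl⟩
    · exact Or.inr ⟨rfl, trivial, rfl⟩
  | dual T ih =>
    intro χ c k k' h
    rcases k with v | v
    · cases v with
      | root =>
        cases c with
        | false => simp [cp] at h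
        | true =>
          simp only [cp] at h; cases h
          exact Or.inr ⟨rfl, fun hs => hs.1.elim⟩
      | dchild v =>
        cases c with
        | false =>
          simp only [cp] at h; cases h
          exact adj_stepD χ true (.inr v) ih (by
            intro hx
            have : v = Vtx.root T := by simpa [eV] using hx
            subst this
            exact Or.inl ⟨rfl, fun hs => hs.1.elim⟩)
        | true =>
          simp only [cp] at h; cases h
          exact adj_stepD χ false (.inr v) ih (by
            intro hx; simp [eV] at hx)
    · cases v with
      | root =>
        cases c with
        | true => simp [cp] at h
        | false =>
          simp only [cp] at h; cases h
          exact Or.inr ⟨rfl, fun hs => hs.1.elim⟩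
      | dchild v =>
        cases c with
        | false =>
          simp only [cp] at h; cases h
          exact adj_stepD χ true (.inl v) ih (by
            intro hx; simp [eV] at hx)
        | true =>
          simp only [cp] at h; cases h
          exact adj_stepD χ false (.inl v) ih (by
            intro hx
            have : v = Vtx.root T := by simpa [eV] using hx
            subst this
            exact Or.inl ⟨rfl, fun hs => hs.1.elim⟩)
  | tensor T U ihT ihU =>
    intro χ c k k' h
    cases hb : χ (.inl (.root _)) with
    | false =>
      rcases k with v | v
      · cases v with
        | root =>
          cases c with
          | false => simp [cp, hb] at h
          | true =>
            simp only [cp, hb] at h; simp at h; cases h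
            exact Or.inr ⟨rfl, fun _ => hb⟩
        | tleft v =>
          cases c with
          | false =>
            simp only [cp, hb] at h; simp at h; cases h
            exact adj_stepT χ false (.inl v) ihT (by
              intro hx
              have : v = Vtx.root T := by simpa [eV] using hx
              subst this
              exact Or.inl ⟨rfl, fun _ => hb⟩)
          | true =>
            simp only [cp, hb] at h; cases h
            exact adj_stepT χ true (.inl v) ihT (by
              intro hx; simp [eV] at hx)
        | tright v =>
          cases c with
          | false =>
            simp only [cp, hb] at h; simp at h; cases h
            exact adj_stepU χ true (.inl v) ihU (by
              intro hx; simp [eV] at hx)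
          | true =>
            simp only [cp, hb] at h; cases h
            exact adj_stepU χ true (.inl v) ihU (by
              intro hx; simp [eV] at hx)
      · cases v with
        | root =>
          cases c with
          | true => simp [cp, hb] at h
          | false =>
            simp only [cp, hb] at h; simp at h; cases h
            exact Or.inr ⟨rfl, fun hs => absurd hs.2 (by simp [vsign])⟩
        | tleft v =>
          cases c with
          | false =>
            simp only [cp, hb] at h; simp at h; cases h
            exact adj_stepT χ false (.inr v) ihT (by
              intro hx; simp [eV] at hx)
          | true =>
            simp only [cp, hb] at h; cases h
            exact adj_stepT χ true (.inr v) ihT (by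
              intro hx
              have : v = Vtx.root T := by simpa [eV] using hx
              subst this
              exact Or.inl ⟨rfl, fun hs => absurd hs.2 (by simp [vsign])⟩)
        | tright v =>
          cases c with
          | false =>
            simp only [cp, hb] at h; simp at h; cases h
            exact adj_stepU χ true (.inr v) ihU (by
              intro hx
              have : v = Vtx.root U := by simpa [eV] using hx
              subst this
              exact Or.inl ⟨rfl, fun hs => absurd hs.2 (by simp [vsign])⟩)
          | true =>
            simp only [cp, hb] at h; cases h
            exact adj_stepU χ true (.inr v) ihU (by
              intro hx
              have : v = Vtx.root U := by simpa [eV] using hx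
              subst this
              exact Or.inl ⟨rfl, fun hs => absurd hs.2 (by simp [vsign])⟩)
    | true =>
      rcases k with v | v
      · cases v with
        | root =>
          cases c with
          | false => simp [cp, hb] at h
          | true =>
            simp only [cp, hb] at h; simp at h; cases h
            exact Or.inr ⟨rfl, fun _ => hb⟩
        | tleft v =>
          cases c with
          | false =>
            simp only [cp, hb] at h; simp at h; cases h
            exact adj_stepT χ true (.inl v) ihT (by
              intro hx; simp [eV] at hx)
          | true =>
            simp only [cp, hb] at h; cases h
            exact adj_stepT χ true (.inl v) ihT (by
              intro hx; simp [eV] at hx)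
        | tright v =>
          cases c with
          | false =>
            simp only [cp, hb] at h; simp at h; cases h
            exact adj_stepU χ false (.inl v) ihU (by
              intro hx
              have : v = Vtx.root U := by simpa [eV] using hx
              subst this
              exact Or.inl ⟨rfl, fun _ => hb⟩)
          | true =>
            simp only [cp, hb] at h; cases h
            exact adj_stepU χ true (.inl v) ihU (by
              intro hx; simp [eV] at hx)
      · cases v with
        | root =>
          cases c with
          | true => simp [cp, hb] at h
          | false =>
            simp only [cp, hb] at h; simp at h; cases h
            exact Or.inr ⟨rfl, fun hs => absurd hs.2 (by simp [vsign])⟩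
        | tleft v =>
          cases c with
          | false =>
            simp only [cp, hb] at h; simp at h; cases h
            exact adj_stepT χ true (.inr v) ihT (by
              intro hx
              have : v = Vtx.root T := by simpa [eV] using hx
              subst this
              exact Or.inl ⟨rfl, fun hs => absurd hs.2 (by simp [vsign])⟩)
          | true =>
            simp only [cp, hb] at h; cases h
            exact adj_stepT χ true (.inr v) ihT (by
              intro hx
              have : v = Vtx.root T := by simpa [eV] using hx
              subst this
              exact Or.inl ⟨rfl, fun hs => absurd hs.2 (by simp [vsign])⟩)
        | tright v =>
          cases c with
          | false =>
            simp only [cp, hb] at h; simp at h; cases h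
            exact adj_stepU χ false (.inr v) ihU (by
              intro hx; simp [eV] at hx)
          | true =>
            simp only [cp, hb] at h; cases h
            exact adj_stepU χ true (.inr v) ihU (by
              intro hx
              have : v = Vtx.root U := by simpa [eV] using hx
              subst this
              exact Or.inl ⟨rfl, fun hs => absurd hs.2 (by simp [vsign])⟩)


lemma coreRel_tensor_cases {T U : Shape A} (χ : K (Shape.tensor T U) → Bool)
    (x y : K (Shape.tensor T U)) (h : CoreRel χ x y) :
    (∃ a b : K T, x = iT a ∧ y = iT b ∧ CoreRel (χ ∘ iT) a b) ∨
    (∃ a b : K U, x = iU a ∧ y = iU b ∧ CoreRel (χ ∘ iU) a b) ∨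
    (x = .inl (.tleft (.root T)) ∧ y = .inl (.root _) ∧ χ (.inl (.root _)) = false) ∨
    (x = .inl (.tright (.root U)) ∧ y = .inl (.root _) ∧ χ (.inl (.root _)) = true) ∨
    (x = .inr (.tleft (.root T)) ∧ y = .inr (.root _)) ∨
    (x = .inr (.tright (.root U)) ∧ y = .inr (.root _)) := by
  rcases x with v | v <;> cases v <;> rcases y with w | w <;> cases w
  -- x = inl root
  · exact absurd h.1 (by simp [parent])
  · exact absurd h.1 (by simp [parent])
  · exact absurd h.1 (by simp [parent])
  · exact h.2.1.elim
  · exact h.2.1.elim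
  · exact h.2.1.elim
  -- x = inl (tleft v)
  case inl.tleft.inl.root v =>
    obtain rfl := (parent_tleft_root_iff v).mp h.1
    exact Or.inr (Or.inr (Or.inl ⟨rfl, rfl, h.2 ⟨trivial, rfl⟩⟩))
  case inl.tleft.inl.tleft v w =>
    exact Or.inl ⟨.inl v, .inl w, rfl, rfl, (coreRel_iT χ (.inl v) (.inl w)).mp h⟩
  case inl.tleft.inl.tright v w =>
    exact absurd h.1 (parent_tleft_ne_tright v w)
  case inl.tleft.inr.root v => exact absurd h.2.2 (by intro hh; cases hh)
  case inl.tleft.inr.tleft v w =>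
    exact Or.inl ⟨.inl v, .inr w, rfl, rfl, (coreRel_iT χ (.inl v) (.inr w)).mp h⟩
  case inl.tleft.inr.tright v w => exact absurd h.2.2 (by intro hh; cases hh)
  -- x = inl (tright v)
  case inl.tright.inl.root v =>
    obtain rfl := (parent_tright_root_iff v).mp h.1
    exact Or.inr (Or.inr (Or.inr (Or.inl ⟨rfl, rfl, h.2 ⟨trivial, rfl⟩⟩)))
  case inl.tright.inl.tleft v w =>
    exact absurd h.1 (parent_tright_ne_tleft v w)
  case inl.tright.inl.tright v w =>
    exact Or.inr (Or.inl ⟨.inl v, .inl w, rfl, rfl, (coreRel_iU χ (.inl v) (.inl w)).mp h⟩)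
  case inl.tright.inr.root v => exact absurd h.2.2 (by intro hh; cases hh)
  case inl.tright.inr.tleft v w => exact absurd h.2.2 (by intro hh; cases hh)
  case inl.tright.inr.tright v w =>
    exact Or.inr (Or.inl ⟨.inl v, .inr w, rfl, rfl, (coreRel_iU χ (.inl v) (.inr w)).mp h⟩)
  -- x = inr root
  · exact h.2.1.elim
  · exact h.2.1.elim
  · exact h.2.1.elim
  · exact absurd h.1 (by simp [parent])
  · exact absurd h.1 (by simp [parent])
  · exact absurd h.1 (by simp [parent])
  -- x = inr (tleft v)
  case inr.tleft.inl.root v => exact absurd h.2.2 (by intro hh; cases hh)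
  case inr.tleft.inl.tleft v w =>
    exact Or.inl ⟨.inr v, .inl w, rfl, rfl, (coreRel_iT χ (.inr v) (.inl w)).mp h⟩
  case inr.tleft.inl.tright v w => exact absurd h.2.2 (by intro hh; cases hh)
  case inr.tleft.inr.root v =>
    obtain rfl := (parent_tleft_root_iff v).mp h.1
    exact Or.inr (Or.inr (Or.inr (Or.inr (Or.inl ⟨rfl, rfl⟩))))
  case inr.tleft.inr.tleft v w =>
    exact Or.inl ⟨.inr v, .inr w, rfl, rfl, (coreRel_iT χ (.inr v) (.inr w)).mp h⟩
  case inr.tleft.inr.tright v w =>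
    exact absurd h.1 (parent_tleft_ne_tright v w)
  -- x = inr (tright v)
  case inr.tright.inl.root v => exact absurd h.2.2 (by intro hh; cases hh)
  case inr.tright.inl.tleft v w => exact absurd h.2.2 (by intro hh; cases hh)
  case inr.tright.inl.tright v w =>
    exact Or.inr (Or.inl ⟨.inr v, .inl w, rfl, rfl, (coreRel_iU χ (.inr v) (.inl w)).mp h⟩)
  case inr.tright.inr.root v =>
    obtain rfl := (parent_tright_root_iff v).mp h.1
    exact Or.inr (Or.inr (Or.inr (Or.inr (Or.inr ⟨rfl, rfl⟩))))
  case inr.tright.inr.tleft v w =>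
    exact absurd h.1 (parent_tright_ne_tleft v w)
  case inr.tright.inr.tright v w =>
    exact Or.inr (Or.inl ⟨.inr v, .inr w, rfl, rfl, (coreRel_iU χ (.inr v) (.inr w)).mp h⟩)

lemma coreRel_dual_cases {T : Shape A} (χ : K (Shape.dual T) → Bool)
    (x y : K (Shape.dual T)) (h : CoreRel χ x y) :
    (∃ a b : K T, x = iD a ∧ y = iD b ∧ CoreRel (χ ∘ iD) a b) ∨
    (x = .inl (.dchild (.root T)) ∧ y = .inl (.root _)) ∨
    (x = .inr (.dchild (.root T)) ∧ y = .inr (.root _)) := by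
  rcases x with v | v <;> cases v <;> rcases y with w | w <;> cases w
  -- x = inl root
  · exact absurd h.1 (by simp [parent])
  · exact absurd h.1 (by simp [parent])
  · exact h.2.1.elim
  · exact h.2.1.elim
  -- x = inl (dchild v)
  case inl.dchild.inl.root v =>
    obtain rfl := (parent_dchild_root_iff v).mp h.1
    exact Or.inr (Or.inl ⟨rfl, rfl⟩)
  case inl.dchild.inl.dchild v w =>
    exact Or.inl ⟨.inr v, .inr w, rfl, rfl, (coreRel_iD χ (.inr v) (.inr w)).mp h⟩
  case inl.dchild.inr.root v => exact absurd h.2.2 (by intro hh; cases hh)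
  case inl.dchild.inr.dchild v w =>
    exact Or.inl ⟨.inr v, .inl w, rfl, rfl, (coreRel_iD χ (.inr v) (.inl w)).mp h⟩
  -- x = inr root
  · exact h.2.1.elim
  · exact h.2.1.elim
  · exact absurd h.1 (by simp [parent])
  · exact absurd h.1 (by simp [parent])
  -- x = inr (dchild v)
  case inr.dchild.inl.root v => exact absurd h.2.2 (by intro hh; cases hh)
  case inr.dchild.inl.dchild v w =>
    exact Or.inl ⟨.inl v, .inr w, rfl, rfl, (coreRel_iD χ (.inl v) (.inr w)).mp h⟩
  case inr.dchild.inr.root v =>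
    obtain rfl := (parent_dchild_root_iff v).mp h.1
    exact Or.inr (Or.inr ⟨rfl, rfl⟩)
  case inr.dchild.inr.dchild v w =>
    exact Or.inl ⟨.inl v, .inl w, rfl, rfl, (coreRel_iD χ (.inl v) (.inl w)).mp h⟩


lemma comp_step {X S : Shape A} {χ' : K X → Bool} {c' : Bool} {f : K X → K S}
    {g : K S → Option (K S)} {dx dy : K S} {x y : K X}
    (hih : cp X χ' c' x = some y ∨ cp X χ' c' y = some x)
    (hx : g (f x) = some (((cp X χ' c' x).map f).getD dx))
    (hy : g (f y) = some (((cp X χ' c' y).map f).getD dy)) :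
    g (f x) = some (f y) ∨ g (f y) = some (f x) := by
  rcases hih with h | h
  · left; rw [hx, h]; rfl
  · right; rw [hy, h]; rfl

lemma cp_complete : ∀ (S : Shape A) (χ : K S → Bool) (c : Bool) (k k' : K S),
    CoreRel χ k k' → cp S χ c k = some k' ∨ cp S χ c k' = some k := by
  intro S
  induction S with
  | gen a =>
    intro χ c k k' h
    rcases k with v | v <;> cases v <;> rcases k' with w | w <;> cases w
    · exact absurd h.1 (by simp [parent])
    · cases c
      · exact Or.inr rfl
      · exact Or.inl rfl
    · exact Bool.noConfusion h.1
    · exact absurd h.1 (by simp [parent])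
  | unit =>
    intro χ c k k' h
    rcases k with v | v <;> cases v <;> rcases k' with w | w <;> cases w
    · exact absurd h.1 (by simp [parent])
    · cases c
      · exact Or.inr rfl
      · exact Or.inl rfl
    · exact Bool.noConfusion h.1
    · exact absurd h.1 (by simp [parent])
  | dual T ih =>
    intro χ c k k' h
    rcases coreRel_dual_cases χ k k' h with ⟨a, b, rfl, rfl, hab⟩ | ⟨rfl, rfl⟩ | ⟨rfl, rfl⟩
    · cases c with
      | false =>
        exact comp_step (dx := .inl (.root _)) (dy := .inl (.root _)) (ih (χ ∘ iD) true a b hab)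
          (by rcases a with v | v <;> rfl) (by rcases b with v | v <;> rfl)
      | true =>
        exact comp_step (dx := .inr (.root _)) (dy := .inr (.root _)) (ih (χ ∘ iD) false a b hab)
          (by rcases a with v | v <;> rfl) (by rcases b with v | v <;> rfl)
    · cases c with
      | false =>
        left
        have h0 : cp T (χ ∘ iD) true (.inr (.root T)) = none := (cp_eq_none _ _ _).mpr rfl
        show some _ = _
        rw [show ((cp T (χ ∘ iD) true (.inr (.root T))).map iD).getD
          (Sum.inl (Vtx.root (Shape.dual T))) = Sum.inl (Vtx.root (Shape.dual T)) by
            rw [h0]; rfl]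
      | true => exact Or.inr rfl
    · cases c with
      | false => exact Or.inr rfl
      | true =>
        left
        have h0 : cp T (χ ∘ iD) false (.inl (.root T)) = none := (cp_eq_none _ _ _).mpr rfl
        show some _ = _
        rw [show ((cp T (χ ∘ iD) false (.inl (.root T))).map iD).getD
          (Sum.inr (Vtx.root (Shape.dual T))) = Sum.inr (Vtx.root (Shape.dual T)) by
            rw [h0]; rfl]
  | tensor T U ihT ihU =>
    intro χ c k k' h
    rcases coreRel_tensor_cases χ k k' h with
      ⟨a, b, rfl, rfl, hab⟩ | ⟨a, b, rfl, rfl, hab⟩ |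
      ⟨rfl, rfl, hχ⟩ | ⟨rfl, rfl, hχ⟩ | ⟨rfl, rfl⟩ | ⟨rfl, rfl⟩
    · -- T part
      cases c with
      | false =>
        cases hb : χ (.inl (.root _)) with
        | false =>
          exact comp_step (dx := .inl (.root _)) (dy := .inl (.root _)) (ihT (χ ∘ iT) false a b hab)
            (by rcases a with v | v <;> simp [cp, iT, hb])
            (by rcases b with v | v <;> simp [cp, iT, hb])
        | true =>
          exact comp_step (dx := .inr (.root _)) (dy := .inr (.root _)) (ihT (χ ∘ iT) true a b hab)
            (by rcases a with v | v <;> simp [cp, iT, hb])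
            (by rcases b with v | v <;> simp [cp, iT, hb])
      | true =>
        exact comp_step (dx := .inr (.root _)) (dy := .inr (.root _)) (ihT (χ ∘ iT) true a b hab)
          (by rcases a with v | v <;> rfl) (by rcases b with v | v <;> rfl)
    · -- U part
      cases c with
      | false =>
        cases hb : χ (.inl (.root _)) with
        | false =>
          exact comp_step (dx := .inr (.root _)) (dy := .inr (.root _)) (ihU (χ ∘ iU) true a b hab)
            (by rcases a with v | v <;> simp [cp, iU, hb])
            (by rcases b with v | v <;> simp [cp, iU, hb])
        | true =>
          exact comp_step (dx := .inl (.root _)) (dy := .inl (.root _)) (ihU (χ ∘ iU) false a b hab)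
            (by rcases a with v | v <;> simp [cp, iU, hb])
            (by rcases b with v | v <;> simp [cp, iU, hb])
      | true =>
        exact comp_step (dx := .inr (.root _)) (dy := .inr (.root _)) (ihU (χ ∘ iU) true a b hab)
          (by rcases a with v | v <;> rfl) (by rcases b with v | v <;> rfl)
    · -- left root, surviving T child (χ = false)
      have h0 : cp T (χ ∘ iT) false (.inl (.root T)) = none := (cp_eq_none _ _ _).mpr rfl
      simp only [iT] at h0
      cases c with
      | false => left; simp [cp, hχ, h0, iT]
      | true => right; simp [cp, hχ]
    · -- left root, surviving U child (χ = true)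
      have h0 : cp U (χ ∘ iU) false (.inl (.root U)) = none := (cp_eq_none _ _ _).mpr rfl
      simp only [iU] at h0
      cases c with
      | false => left; simp [cp, hχ, h0, iU]
      | true => right; simp [cp, hχ]
    · -- right root, T child
      have h0 : cp T (χ ∘ iT) true (.inr (.root T)) = none := (cp_eq_none _ _ _).mpr rfl
      simp only [iT] at h0
      cases c with
      | false =>
        cases hb : χ (.inl (.root _)) with
        | false => right; simp [cp, hb]
        | true => left; simp [cp, hb, h0, iT]
      | true => left; simp [cp, h0, iT]
    · -- right root, U child
      have h0 : cp U (χ ∘ iU) true (.inr (.root U)) = none := (cp_eq_none _ _ _).mpr rfl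
      simp only [iU] at h0
      cases c with
      | false =>
        cases hb : χ (.inl (.root _)) with
        | false => left; simp [cp, hb, h0, iU]
        | true => right; simp [cp, hb]
      | true => left; simp [cp, h0, iU]

end Invariants


section Assemble

variable {A : Type}
open Shape CutSeq

/-- The root vertex of `two S S` (root of the dual copy). -/
def RootV (S : Shape A) : (two S S).Vt := Sum.inl ⟨false, Vtx.root _⟩

/-- Embedding of core vertices into the sequent. -/
def ofK {S : Shape A} : K S → (two S S).Vt
  | .inl v => Sum.inl ⟨false, Vtx.dchild v⟩
  | .inr v => Sum.inl ⟨true, v⟩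

lemma vt_cases {S : Shape A} (x : (two S S).Vt) :
    x = RootV S ∨ ∃ k : K S, x = ofK k := by
  rcases x with ⟨b, v⟩ | ⟨j, _⟩
  · cases b with
    | false =>
      cases v with
      | root => exact Or.inl rfl
      | dchild u => exact Or.inr ⟨.inl u, rfl⟩
    | true => exact Or.inr ⟨.inr v, rfl⟩
  · exact j.elim

@[simp] lemma vtF_inj {S : Shape A} (a b : Vtx (Shape.dual S)) :
    (Sum.inl ⟨false, a⟩ : (two S S).Vt) = Sum.inl ⟨false, b⟩ ↔ a = b := by
  constructor
  · intro h
    injection h with h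
    injection h
  · rintro rfl; rfl

@[simp] lemma vtT_inj {S : Shape A} (a b : Vtx S) :
    (Sum.inl ⟨true, a⟩ : (two S S).Vt) = Sum.inl ⟨true, b⟩ ↔ a = b := by
  constructor
  · intro h
    injection h with h
    injection h
  · rintro rfl; rfl

@[simp] lemma vtF_ne_T {S : Shape A} (a : Vtx (Shape.dual S)) (b : Vtx S) :
    (Sum.inl ⟨false, a⟩ : (two S S).Vt) ≠ Sum.inl ⟨true, b⟩ := by
  intro h
  injection h with h
  injection h with h1 h2
  exact Bool.noConfusion h1

@[simp] lemma vtT_ne_F {S : Shape A} (a : Vtx S) (b : Vtx (Shape.dual S)) :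
    (Sum.inl ⟨true, a⟩ : (two S S).Vt) ≠ Sum.inl ⟨false, b⟩ := by
  intro h
  injection h with h
  injection h with h1 h2
  exact Bool.noConfusion h1

@[simp] lemma dchild_inj {S : Shape A} (a b : Vtx S) :
    Vtx.dchild a = Vtx.dchild b ↔ a = b := by
  constructor
  · intro h
    injection h
  · rintro rfl; rfl

lemma ofK_inj {S : Shape A} {k k' : K S} (h : ofK k = ofK k') : k = k' := by
  rcases k with v | v <;> rcases k' with w | w
  · have h2 := (vtF_inj _ _).mp h
    have h3 : v = w := by injection h2
    rw [h3]
  · exact absurd h (vtF_ne_T _ _)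
  · exact absurd h (vtT_ne_F _ _)
  · have h3 := (vtT_inj _ _).mp h
    rw [h3]

lemma ofK_ne_root {S : Shape A} (k : K S) : ofK k ≠ RootV S := by
  rcases k with v | v
  · intro h
    have h2 := (vtF_inj _ _).mp h
    injection h2
  · intro h
    exact vtT_ne_F _ _ h

/-- The underlying relation of the switching graph. -/
def GRel {S : Shape A} (L : LaxLF (two S S)) (σ : (two S S).Vt → Bool)
    (a b : (two S S).Vt) : Prop :=
  (CutSeq.par a = some b ∧ (CutSeq.switched b → σ b = CutSeq.side a)) ∨
    CutSeq.cutEdge a b ∨ ∃ h : CutSeq.IsNeg a, L.f ⟨a, h⟩ = b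

lemma switch_adj {S : Shape A} (L : LaxLF (two S S)) (σ : (two S S).Vt → Bool)
    (a b : (two S S).Vt) :
    (switchGraph L σ).Adj a b ↔ a ≠ b ∧ (GRel L σ a b ∨ GRel L σ b a) :=
  SimpleGraph.fromRel_adj _ a b

lemma cutEdge_false {S : Shape A} (a b : (two S S).Vt) : ¬ CutSeq.cutEdge a b := by
  rintro ⟨j, _, _⟩; exact j.elim

lemma par_inlF {S : Shape A} (v : Vtx (Shape.dual S)) :
    CutSeq.par (Γ := two S S) (Sum.inl ⟨false, v⟩) =
      (parent v).map (fun p => Sum.inl ⟨false, p⟩) := rfl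

lemma par_inlT {S : Shape A} (v : Vtx S) :
    CutSeq.par (Γ := two S S) (Sum.inl ⟨true, v⟩) =
      (parent v).map (fun p => Sum.inl ⟨true, p⟩) := rfl

lemma par_ofK_inl_eq {S : Shape A} (v w : Vtx S) :
    CutSeq.par (ofK (.inl v)) = some (ofK (.inl w)) ↔ parent v = some w := by
  rw [show ofK (.inl v) = (Sum.inl ⟨false, Vtx.dchild v⟩ : (two S S).Vt) from rfl,
    par_inlF, parent_dchild]
  cases hp : parent v <;> simp [ofK]
  · intro h; cases h
  · exact Option.some_inj.trans ((vtF_inj _ _).trans (dchild_inj _ _))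

lemma par_ofK_inl_root {S : Shape A} (v : Vtx S) :
    CutSeq.par (ofK (.inl v)) = some (RootV S) ↔ v = Vtx.root S := by
  rw [show ofK (.inl v) = (Sum.inl ⟨false, Vtx.dchild v⟩ : (two S S).Vt) from rfl,
    par_inlF, parent_dchild, ← parent_eq_none]
  cases hp : parent v <;> simp [RootV] <;> try exact rfl
  intro h; cases h

lemma par_ofK_inl_ne_inr {S : Shape A} (v : Vtx S) (w : Vtx S) :
    CutSeq.par (ofK (.inl v)) ≠ some (ofK (.inr w)) := by
  rw [show ofK (.inl v) = (Sum.inl ⟨false, Vtx.dchild v⟩ : (two S S).Vt) from rfl,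
    par_inlF, parent_dchild]
  cases hp : parent v <;> simp [ofK] <;> intro h <;> cases h

lemma par_ofK_inr_eq {S : Shape A} (v w : Vtx S) :
    CutSeq.par (ofK (.inr v)) = some (ofK (.inr w)) ↔ parent v = some w := by
  rw [show ofK (.inr v) = (Sum.inl ⟨true, v⟩ : (two S S).Vt) from rfl, par_inlT]
  cases hp : parent v <;> simp [ofK]
  exact Option.some_inj.trans (vtT_inj _ _)

lemma par_ofK_inr_ne_inl {S : Shape A} (v : Vtx S) (w : Vtx S) :
    CutSeq.par (ofK (.inr v)) ≠ some (ofK (.inl w)) := by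
  rw [show ofK (.inr v) = (Sum.inl ⟨true, v⟩ : (two S S).Vt) from rfl, par_inlT]
  cases hp : parent v <;> simp [ofK] <;> intro h <;> cases h

lemma par_ofK_inr_ne_root {S : Shape A} (v : Vtx S) :
    CutSeq.par (ofK (.inr v)) ≠ some (RootV S) := by
  rw [show ofK (.inr v) = (Sum.inl ⟨true, v⟩ : (two S S).Vt) from rfl, par_inlT]
  cases hp : parent v <;> simp [RootV] <;> try exact rfl
  all_goals intro h; cases h

lemma switched_ofK_inl {S : Shape A} (w : Vtx S) :
    CutSeq.switched (ofK (.inl w)) ↔ swL w := by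
  show IsTensorSh (subtreeAt (Vtx.dchild w)) ∧ vsign (Vtx.dchild w) = false ↔ _
  simp [swL]

lemma switched_ofK_inr {S : Shape A} (w : Vtx S) :
    CutSeq.switched (ofK (.inr w)) ↔ swR w := by
  show IsTensorSh (subtreeAt w) ∧ vsign w = false ↔ _
  simp [swR]

lemma switched_root {S : Shape A} : ¬ CutSeq.switched (RootV S) := fun hs => hs.1.elim

lemma side_ofK_inl {S : Shape A} (v : Vtx S) : CutSeq.side (ofK (.inl v)) = sideOf v :=
  sideOf_dchild v

lemma side_ofK_inr {S : Shape A} (v : Vtx S) : CutSeq.side (ofK (.inr v)) = sideOf v := rfl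

lemma isNeg_ofK_inl {S : Shape A} (v : Vtx S) :
    CutSeq.IsNeg (ofK (.inl v)) ↔ IsAtom (subtreeAt v) ∧ vsign v = true := by
  show IsAtom (subtreeAt (Vtx.dchild v)) ∧ vsign (Vtx.dchild v) = false ↔ _
  simp

lemma isNeg_ofK_inr {S : Shape A} (v : Vtx S) :
    CutSeq.IsNeg (ofK (.inr v)) ↔ IsAtom (subtreeAt v) ∧ vsign v = false := Iff.rfl

lemma isNeg_root {S : Shape A} : ¬ CutSeq.IsNeg (RootV S) := fun h => h.1.elim

lemma f_ofK_inl {S : Shape A} {L : LaxLF (two S S)} (hL : idChar S L) (v : Vtx S)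
    (h : CutSeq.IsNeg (ofK (.inl v))) : L.f ⟨ofK (.inl v), h⟩ = ofK (.inr v) :=
  hL.1 v h

lemma f_ofK_inr {S : Shape A} {L : LaxLF (two S S)} (hL : idChar S L) (v : Vtx S)
    (h : CutSeq.IsNeg (ofK (.inr v))) : L.f ⟨ofK (.inr v), h⟩ = ofK (.inl v) :=
  hL.2 v h

lemma grel_ofK {S : Shape A} {L : LaxLF (two S S)} (hL : idChar S L)
    (σ : (two S S).Vt → Bool) (k k' : K S) :
    GRel L σ (ofK k) (ofK k') ↔ CoreRel (σ ∘ ofK) k k' := by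
  rcases k with v | v <;> rcases k' with w | w
  · constructor
    · rintro (⟨h1, h2⟩ | hcut | ⟨hneg, hf⟩)
      · refine ⟨(par_ofK_inl_eq v w).mp h1, fun hs => ?_⟩
        have := h2 ((switched_ofK_inl w).mpr hs)
        rwa [side_ofK_inl] at this
      · exact absurd hcut (cutEdge_false _ _)
      · rw [f_ofK_inl hL v hneg] at hf
        exact absurd hf (vtT_ne_F _ _)
    · rintro ⟨h1, h2⟩
      exact Or.inl ⟨(par_ofK_inl_eq v w).mpr h1, fun hs => by
        rw [side_ofK_inl]; exact h2 ((switched_ofK_inl w).mp hs)⟩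
  · constructor
    · rintro (⟨h1, h2⟩ | hcut | ⟨hneg, hf⟩)
      · exact absurd h1 (par_ofK_inl_ne_inr v w)
      · exact absurd hcut (cutEdge_false _ _)
      · rw [f_ofK_inl hL v hneg] at hf
        obtain rfl : v = w := (vtT_inj _ _).mp hf
        obtain ⟨ha, hs⟩ := (isNeg_ofK_inl v).mp hneg
        exact ⟨hs, ha, rfl⟩
    · rintro ⟨hs, ha, rfl⟩
      exact Or.inr (Or.inr ⟨(isNeg_ofK_inl v).mpr ⟨ha, hs⟩, f_ofK_inl hL v _⟩)
  · constructor
    · rintro (⟨h1, h2⟩ | hcut | ⟨hneg, hf⟩)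
      · exact absurd h1 (par_ofK_inr_ne_inl v w)
      · exact absurd hcut (cutEdge_false _ _)
      · rw [f_ofK_inr hL v hneg] at hf
        obtain rfl : v = w := by
          have h2 := (vtF_inj _ _).mp hf
          injection h2
        obtain ⟨ha, hs⟩ := (isNeg_ofK_inr v).mp hneg
        exact ⟨hs, ha, rfl⟩
    · rintro ⟨hs, ha, rfl⟩
      exact Or.inr (Or.inr ⟨(isNeg_ofK_inr v).mpr ⟨ha, hs⟩, f_ofK_inr hL v _⟩)
  · constructor
    · rintro (⟨h1, h2⟩ | hcut | ⟨hneg, hf⟩)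
      · refine ⟨(par_ofK_inr_eq v w).mp h1, fun hs => ?_⟩
        have := h2 ((switched_ofK_inr w).mpr hs)
        rwa [side_ofK_inr] at this
      · exact absurd hcut (cutEdge_false _ _)
      · rw [f_ofK_inr hL v hneg] at hf
        exact absurd hf (vtF_ne_T _ _)
    · rintro ⟨h1, h2⟩
      exact Or.inl ⟨(par_ofK_inr_eq v w).mpr h1, fun hs => by
        rw [side_ofK_inr]; exact h2 ((switched_ofK_inr w).mp hs)⟩

lemma grel_root_left {S : Shape A} {L : LaxLF (two S S)}
    (σ : (two S S).Vt → Bool) (x : (two S S).Vt) : ¬ GRel L σ (RootV S) x := by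
  rintro (⟨h1, _⟩ | hcut | ⟨hneg, _⟩)
  · exact Option.some_ne_none _ h1.symm
  · exact cutEdge_false _ _ hcut
  · exact isNeg_root hneg

lemma grel_to_root {S : Shape A} {L : LaxLF (two S S)} (hL : idChar S L)
    (σ : (two S S).Vt → Bool) (k : K S) :
    GRel L σ (ofK k) (RootV S) ↔ k = .inl (.root S) := by
  rcases k with v | v
  · constructor
    · rintro (⟨h1, _⟩ | hcut | ⟨hneg, hf⟩)
      · rw [(par_ofK_inl_root v).mp h1]
      · exact absurd hcut (cutEdge_false _ _)
      · rw [f_ofK_inl hL v hneg] at hf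
        exact absurd hf (vtT_ne_F _ _)
    · rintro h
      obtain rfl : v = Vtx.root S := by simpa using h
      exact Or.inl ⟨(par_ofK_inl_root _).mpr rfl, fun hs => absurd hs switched_root⟩
  · constructor
    · rintro (⟨h1, _⟩ | hcut | ⟨hneg, hf⟩)
      · exact absurd h1 (par_ofK_inr_ne_root v)
      · exact absurd hcut (cutEdge_false _ _)
      · rw [f_ofK_inr hL v hneg] at hf
        have h2 := (vtF_inj _ _).mp hf
        exact absurd h2 (by intro hh; injection hh)
    · rintro h; exact absurd h (by simp)

/-- The global parent function. -/
noncomputable def gp (S : Shape A) (σ : (two S S).Vt → Bool) :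
    (two S S).Vt → (two S S).Vt
  | Sum.inl ⟨false, .root _⟩ => RootV S
  | Sum.inl ⟨false, .dchild v⟩ =>
      ((cp S (σ ∘ ofK) false (.inl v)).map ofK).getD (RootV S)
  | Sum.inl ⟨true, v⟩ =>
      ((cp S (σ ∘ ofK) false (.inr v)).map ofK).getD (RootV S)
  | Sum.inr ⟨j, _⟩ => j.elim

/-- The global depth function. -/
noncomputable def gd (S : Shape A) (σ : (two S S).Vt → Bool) :
    (two S S).Vt → ℕ
  | Sum.inl ⟨false, .root _⟩ => 0
  | Sum.inl ⟨false, .dchild v⟩ => cd S (σ ∘ ofK) false (.inl v) + 1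
  | Sum.inl ⟨true, v⟩ => cd S (σ ∘ ofK) false (.inr v) + 1
  | Sum.inr ⟨j, _⟩ => j.elim

lemma gp_ofK {S : Shape A} (σ : (two S S).Vt → Bool) (k : K S) :
    gp S σ (ofK k) = ((cp S (σ ∘ ofK) false k).map ofK).getD (RootV S) := by
  rcases k with v | v <;> rfl

lemma gd_ofK {S : Shape A} (σ : (two S S).Vt → Bool) (k : K S) :
    gd S σ (ofK k) = cd S (σ ∘ ofK) false k + 1 := by
  rcases k with v | v <;> rfl

lemma gd_root {S : Shape A} (σ : (two S S).Vt → Bool) : gd S σ (RootV S) = 0 := rfl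

theorem switchOK_of_idChar {S : Shape A} (L : LaxLF (two S S)) (hL : idChar S L) :
    SwitchOK L := by
  intro σ
  refine isTree_of_parent _ (RootV S) (gp S σ) (gd S σ) ?_ ?_ ?_
  · -- adjacency of the parent edges
    intro x hx
    rcases vt_cases x with rfl | ⟨k, rfl⟩
    · exact absurd rfl hx
    · rw [gp_ofK]
      cases hcp : cp S (σ ∘ ofK) false k with
      | some k' =>
        simp only [hcp, Option.map_some, Option.getD_some]
        rw [switch_adj]
        refine ⟨fun he => ?_, ?_⟩
        · obtain rfl := ofK_inj he
          exact absurd (cd_lt S _ false k k hcp) (lt_irrefl _)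
        · rcases cp_adj S _ false k k' hcp with h | h
          · exact Or.inl ((grel_ofK hL σ k k').mpr h)
          · exact Or.inr ((grel_ofK hL σ k' k).mpr h)
      | none =>
        obtain rfl : k = Sum.inl (Vtx.root S) := by
          simpa [eV] using (cp_eq_none _ _ _).mp hcp
        simp only [Option.map_none, Option.getD_none]
        rw [switch_adj]
        exact ⟨ofK_ne_root _, Or.inl ((grel_to_root hL σ _).mpr rfl)⟩
  · -- every edge is a parent edge
    intro x y hadj
    rw [switch_adj] at hadj
    obtain ⟨hne, hrel⟩ := hadj
    rcases vt_cases x with rfl | ⟨k, rfl⟩ <;> rcases vt_cases y with rfl | ⟨k', rfl⟩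
    · exact absurd rfl hne
    · rcases hrel with h | h
      · exact absurd h (grel_root_left σ _)
      · right
        refine ⟨ofK_ne_root _, ?_⟩
        obtain rfl := (grel_to_root hL σ k').mp h
        rw [gp_ofK, show cp S (σ ∘ ofK) false (Sum.inl (Vtx.root S)) = none from
          (cp_eq_none _ _ _).mpr rfl]
        rfl
    · rcases hrel with h | h
      · left
        refine ⟨ofK_ne_root _, ?_⟩
        obtain rfl := (grel_to_root hL σ k).mp h
        rw [gp_ofK, show cp S (σ ∘ ofK) false (Sum.inl (Vtx.root S)) = none from
          (cp_eq_none _ _ _).mpr rfl]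
        rfl
      · exact absurd h (grel_root_left σ _)
    · have hcc : cp S (σ ∘ ofK) false k = some k' ∨ cp S (σ ∘ ofK) false k' = some k := by
        rcases hrel with h | h
        · exact cp_complete S _ false k k' ((grel_ofK hL σ k k').mp h)
        · rcases cp_complete S _ false k' k ((grel_ofK hL σ k' k).mp h) with h' | h'
          · exact Or.inr h'
          · exact Or.inl h'
      rcases hcc with h | h
      · left
        exact ⟨ofK_ne_root _, by rw [gp_ofK, h]; rfl⟩
      · right
        exact ⟨ofK_ne_root _, by rw [gp_ofK, h]; rfl⟩
  · -- depth decreases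
    intro x hx
    rcases vt_cases x with rfl | ⟨k, rfl⟩
    · exact absurd rfl hx
    · rw [gp_ofK]
      cases hcp : cp S (σ ∘ ofK) false k with
      | some k' =>
        simp only [hcp, Option.map_some, Option.getD_some]
        rw [gd_ofK, gd_ofK]
        exact Nat.add_lt_add_right (cd_lt S _ false k k' hcp) 1
      | none =>
        simp only [Option.map_none, Option.getD_none]
        rw [gd_root, gd_ofK]
        exact Nat.succ_pos _

/-- The identity leaf function. -/
noncomputable def idF (S : Shape A) : (two S S).Vt → (two S S).Vt
  | Sum.inl ⟨false, .root _⟩ => RootV S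
  | Sum.inl ⟨false, .dchild v⟩ => Sum.inl ⟨true, v⟩
  | Sum.inl ⟨true, v⟩ => Sum.inl ⟨false, .dchild v⟩
  | Sum.inr ⟨j, _⟩ => j.elim

noncomputable def idL (S : Shape A) : LaxLF (two S S) where
  f v := idF S v.1
  gen_ok := by
    rintro ⟨x, hx⟩ _
    rcases vt_cases x with rfl | ⟨k, rfl⟩
    · exact absurd hx isNeg_root
    · rcases k with v | v
      · obtain ⟨ha, hs⟩ := (isNeg_ofK_inl v).mp hx
        exact ⟨ha, hs⟩
      · obtain ⟨ha, hs⟩ := (isNeg_ofK_inr v).mp hx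
        refine ⟨ha, ?_⟩
        show (!vsign v) = true
        simp [hs]

lemma idL_char (S : Shape A) : idChar S (idL S) :=
  ⟨fun _ _ => rfl, fun _ _ => rfl⟩

end Assemble

/-- The identity leaf function on a shape `S` exists and
satisfies the switching criterion: every switching of the identity `S → S`
is a tree. -/
theorem statement8 (A : Type) (S : Shape A) :
    (∃ L : LaxLF (two S S), idChar S L) ∧
    ∀ L : LaxLF (two S S), idChar S L → SwitchOK L := by
  exact ⟨⟨idL S, idL_char S⟩, fun L hL => switchOK_of_idChar L hL⟩

end Nets
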